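/- Let C = c(P) be the output of the greedy farthest-point algorithm on a finite point set P ⊂ ℝ^d with |C| = k. Then C is a (2k·3^k)-approximate core-set for the k-directional height of P: for every (k−1)-dimensional linear subspace H, max_{q∈C} dist(q,H) ≥ (max_{p∈P} dist(p,H)) / (2k·3^k). -/

import Mathlib

open scoped RealInnerProductSpace
abbrev Pt (d : ℕ) := EuclideanSpace ℝ (Fin d)

def IsGreedy {d k : ℕ} (P : Set (Pt d)) (q : Fin k → Pt d) : Prop :=
  ∀ i : Fin k, q i ∈ P ∧ ∀ p ∈ P,
    Metric.infDist p (Submodule.span ℝ (q '' {j | j < i}) : Set (Pt d)) ≤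
      Metric.infDist (q i) (Submodule.span ℝ (q '' {j | j < i}) : Set (Pt d))

noncomputable def Tsp {d k : ℕ} (q : Fin k → Pt d) (n : ℕ) : Submodule ℝ (Pt d) :=
  Submodule.span ℝ (q '' {j : Fin k | (j : ℕ) < n})

noncomputable def gv {d k : ℕ} (q : Fin k → Pt d) (i : Fin k) : Pt d :=
  q i - (Submodule.orthogonalProjectionOnto (Tsp q i) (q i) : Pt d)

noncomputable def gr {d k : ℕ} (q : Fin k → Pt d) (i : Fin k) : ℝ := ‖gv q i‖

lemma infDist_sub (K : Submodule ℝ (Pt d)) (x : Pt d) :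
    Metric.infDist x (K : Set (Pt d)) = ‖x - Submodule.orthogonalProjectionOnto K x‖ := by
  rw [← Submodule.starProjection_apply, Submodule.starProjection_minimal, Metric.infDist_eq_iInf]
  congr 1

variable {d k : ℕ} (q : Fin k → Pt d)

lemma Tsp_mono {m n : ℕ} (h : m ≤ n) : Tsp q m ≤ Tsp q n :=
  Submodule.span_mono (Set.image_mono fun j hj => lt_of_lt_of_le hj h)

lemma q_mem_Tsp (i : Fin k) : q i ∈ Tsp q ((i : ℕ) + 1) :=
  Submodule.subset_span ⟨i, by simp, rfl⟩

lemma gv_mem_Tsp (i : Fin k) : gv q i ∈ Tsp q ((i : ℕ) + 1) :=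
  sub_mem (q_mem_Tsp q i)
    (Tsp_mono q (Nat.le_succ _) (SetLike.coe_mem _))

lemma gv_inner_Tsp (i : Fin k) {w : Pt d} (hw : w ∈ Tsp q i) : ⟪gv q i, w⟫ = 0 :=
  Submodule.starProjection_inner_eq_zero (q i) w hw

lemma inner_q_gv_self (i : Fin k) : ⟪q i, gv q i⟫ = gr q i ^ 2 := by
  have hq : q i = gv q i + (Submodule.orthogonalProjectionOnto (Tsp q i) (q i) : Pt d) := by
    simp [gv]
  have h2 : ⟪((Submodule.orthogonalProjectionOnto (Tsp q i) (q i) : Pt d)), gv q i⟫ = 0 := by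
    rw [real_inner_comm]; exact gv_inner_Tsp q i (SetLike.coe_mem _)
  rw [hq, inner_add_left, h2, real_inner_self_eq_norm_sq]
  simp [gr]

lemma gr_eq_infDist (i : Fin k) :
    gr q i = Metric.infDist (q i) (Tsp q i : Set (Pt d)) := by
  rw [infDist_sub]; rfl

lemma fact5 (x : Pt d) (i : Fin k) :
    |⟪x, gv q i⟫| ≤ Metric.infDist x (Tsp q i : Set (Pt d)) * gr q i := by
  have hx : ⟪x, gv q i⟫ = ⟪x - Submodule.orthogonalProjectionOnto (Tsp q i) x, gv q i⟫ := by
    have h2 : ⟪((Submodule.orthogonalProjectionOnto (Tsp q i) x : Pt d)), gv q i⟫ = 0 := by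
      rw [real_inner_comm]; exact gv_inner_Tsp q i (SetLike.coe_mem _)
    rw [inner_sub_left, h2]
    ring
  rw [hx, infDist_sub]
  exact abs_real_inner_le_norm _ _

lemma mem_Tsp_of_inner (i : Fin k) (hne : gr q i ≠ 0) {x : Pt d}
    (hx : x ∈ Tsp q ((i : ℕ) + 1)) (hinner : ⟪x, gv q i⟫ = 0) : x ∈ Tsp q i := by
  have hset : {j : Fin k | (j : ℕ) < (i : ℕ) + 1} = insert i {j : Fin k | (j : ℕ) < (i : ℕ)} := by
    ext j; simp [Fin.ext_iff]; omega
  rw [Tsp, hset, Set.image_insert_eq, Submodule.span_insert] at hx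
  obtain ⟨y, hy, z, hz, rfl⟩ := Submodule.mem_sup.mp hx
  obtain ⟨c, rfl⟩ := Submodule.mem_span_singleton.mp hy
  have h0 : ⟪c • q i + z, gv q i⟫ = c * gr q i ^ 2 := by
    have h2 : ⟪z, gv q i⟫ = 0 := by
      rw [real_inner_comm]; exact gv_inner_Tsp q i hz
    rw [inner_add_left, real_inner_smul_left, inner_q_gv_self, h2]
    ring
  rw [hinner] at h0
  have hc : c = 0 := by
    rcases mul_eq_zero.mp h0.symm with h | h
    · exact h
    · exact absurd (pow_eq_zero_iff (by norm_num) |>.mp h) hne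
  simpa [hc, Tsp] using hz

lemma lemA (f : Pt d → ℝ) (hadd : ∀ x y, f (x + y) ≤ f x + f y)
    (hhom : ∀ (a : ℝ) (x : Pt d), f (a • x) = |a| * f x)
    (h : ℝ) (hh : 0 ≤ h) (hfq : ∀ i, f (q i) ≤ h)
    (hb : ∀ i j : Fin k, |⟪q i, gv q j⟫| ≤ gr q j ^ 2) :
    ∀ n, n ≤ k → ∀ C : ℝ, 0 ≤ C → (∀ i : Fin k, (i : ℕ) < n → gr q i ≠ 0) →
    ∀ x ∈ Tsp q n, (∀ i : Fin k, (i : ℕ) < n → |⟪x, gv q i⟫| ≤ C * gr q i ^ 2) →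
    f x ≤ C * (2 ^ n - 1) * h := by
  have hf0 : f 0 = 0 := by
    have := hhom 0 0; simpa using this
  have hfnn : ∀ x, 0 ≤ f x := by
    intro x
    have h1 := hadd x (-x)
    have h2 : f (-x) = f x := by
      have := hhom (-1) x; simpa using this
    rw [h2] at h1
    simp at h1
    rw [hf0] at h1
    linarith
  intro n
  induction n with
  | zero =>
    intro _ C hC _ x hx _
    have : x = 0 := by
      have hempty : (q '' {j : Fin k | (j : ℕ) < 0}) = (∅ : Set (Pt d)) := by simp
      rw [Tsp, hempty, Submodule.span_empty, Submodule.mem_bot] at hx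
      exact hx
    simp [this, hf0]
  | succ n ih =>
    intro hnk C hC hne x hx hbd
    have hn : n < k := hnk
    set i : Fin k := ⟨n, hn⟩ with hi
    have hri : gr q i ≠ 0 := hne i (by simp [hi])
    have hri2 : (0:ℝ) < gr q i ^ 2 := by
      have : 0 ≤ gr q i := norm_nonneg _
      positivity
    set a : ℝ := ⟪x, gv q i⟫ / gr q i ^ 2 with ha
    have haC : |a| ≤ C := by
      rw [ha, abs_div, abs_of_pos hri2]
      rw [div_le_iff₀ hri2]
      exact hbd i (by simp [hi])
    set x' : Pt d := x - a • q i with hx'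
    have hx'i : ⟪x', gv q i⟫ = 0 := by
      rw [hx', inner_sub_left, real_inner_smul_left, inner_q_gv_self, ha]
      field_simp
      ring
    have hx'mem : x' ∈ Tsp q n := by
      have h1 : x' ∈ Tsp q (n + 1) := by
        apply sub_mem hx
        exact Submodule.smul_mem _ _ (q_mem_Tsp q i)
      exact mem_Tsp_of_inner q i hri h1 hx'i
    have hbd' : ∀ j : Fin k, (j : ℕ) < n → |⟪x', gv q j⟫| ≤ 2 * C * gr q j ^ 2 := by
      intro j hj
      rw [hx', inner_sub_left, real_inner_smul_left]
      calc |⟪x, gv q j⟫ - a * ⟪q i, gv q j⟫|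
          ≤ |⟪x, gv q j⟫| + |a| * |⟪q i, gv q j⟫| := by
            rw [← abs_mul]; exact abs_sub _ _
        _ ≤ C * gr q j ^ 2 + C * gr q j ^ 2 := by
            exact add_le_add (hbd j (by omega)) (mul_le_mul haC (hb i j) (abs_nonneg _) hC)
        _ = 2 * C * gr q j ^ 2 := by ring
    have hIH := ih (le_of_lt hn) (2 * C) (by linarith) (fun j hj => hne j (by omega))
      x' hx'mem hbd'
    have hfx : f x ≤ f x' + |a| * f (q i) := by
      have : x = x' + a • q i := by rw [hx']; abel
      rw [this]
      calc f (x' + a • q i) ≤ f x' + f (a • q i) := hadd _ _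
        _ = f x' + |a| * f (q i) := by rw [hhom]
    have haf : |a| * f (q i) ≤ C * h :=
      mul_le_mul haC (hfq i) (hfnn _) hC
    have : (2:ℝ) ^ (n+1) - 1 = 2 * (2 ^ n - 1) + 1 := by ring
    rw [this]
    nlinarith [hIH, hfx, haf]
theorem greedy_dirHeight_coreset {d k : ℕ} (hk : 1 ≤ k) (P : Set (Pt d))
    (hfin : P.Finite) (q : Fin k → Pt d) (hg : IsGreedy P q)
    (H : Submodule ℝ (Pt d)) (hH : Module.finrank ℝ H = k - 1)
    (p : Pt d) (hp : p ∈ P) :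
    Metric.infDist p (H : Set (Pt d)) ≤
      (2 * k * 3 ^ k) * ⨆ i : Fin k, Metric.infDist (q i) (H : Set (Pt d)) := by
  classical
  set h := ⨆ i : Fin k, Metric.infDist (q i) (H : Set (Pt d)) with hdef
  have hnemp : Nonempty (Fin k) := ⟨⟨0, hk⟩⟩
  have hbdd : BddAbove (Set.range fun i : Fin k => Metric.infDist (q i) (H : Set (Pt d))) :=
    (Set.finite_range _).bddAbove
  have hfq1 : ∀ i : Fin k, Metric.infDist (q i) (H : Set (Pt d)) ≤ h := fun i =>
    le_ciSup hbdd i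
  have hh : 0 ≤ h := le_trans Metric.infDist_nonneg (hfq1 ⟨0, hk⟩)
  have hqP : ∀ i, q i ∈ P := fun i => (hg i).1
  have hgr : ∀ x ∈ P, ∀ i : Fin k, Metric.infDist x (Tsp q (i : ℕ) : Set (Pt d)) ≤ gr q i := by
    intro x hx i
    rw [gr_eq_infDist]
    exact (hg i).2 x hx
  have hb : ∀ i j : Fin k, |⟪q i, gv q j⟫| ≤ gr q j ^ 2 := by
    intro i j
    calc |⟪q i, gv q j⟫| ≤ Metric.infDist (q i) (Tsp q (j : ℕ) : Set (Pt d)) * gr q j :=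
          fact5 q (q i) j
      _ ≤ gr q j * gr q j :=
          mul_le_mul_of_nonneg_right (hgr _ (hqP i) j) (norm_nonneg _)
      _ = gr q j ^ 2 := (sq (gr q j)).symm
  -- f1 = distance to H
  set f1 : Pt d → ℝ := fun x => Metric.infDist x (H : Set (Pt d)) with hf1
  have hadd1 : ∀ x y, f1 (x + y) ≤ f1 x + f1 y := by
    intro x y
    have hmem : (Submodule.orthogonalProjectionOnto H x : Pt d) + (Submodule.orthogonalProjectionOnto H y : Pt d)
        ∈ (H : Set (Pt d)) := add_mem (SetLike.coe_mem _) (SetLike.coe_mem _)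
    calc f1 (x + y) ≤ dist (x + y)
          ((Submodule.orthogonalProjectionOnto H x : Pt d) + (Submodule.orthogonalProjectionOnto H y : Pt d)) :=
          Metric.infDist_le_dist_of_mem hmem
      _ = ‖(x - Submodule.orthogonalProjectionOnto H x) + (y - Submodule.orthogonalProjectionOnto H y)‖ := by
          rw [dist_eq_norm]; congr 1; abel
      _ ≤ ‖x - Submodule.orthogonalProjectionOnto H x‖ + ‖y - Submodule.orthogonalProjectionOnto H y‖ := norm_add_le _ _
      _ = f1 x + f1 y := by rw [hf1]; simp only []; rw [infDist_sub, infDist_sub]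
  have hhom1 : ∀ (a : ℝ) (x : Pt d), f1 (a • x) = |a| * f1 x := by
    intro a x
    have hps : (Submodule.orthogonalProjectionOnto H (a • x) : Pt d) = a • (Submodule.orthogonalProjectionOnto H x : Pt d) := by
      rw [map_smul]; rfl
    rw [hf1]; simp only []
    rw [infDist_sub, infDist_sub, hps, ← smul_sub, norm_smul, Real.norm_eq_abs]
  have hpbd : ∀ i : Fin k, |⟪p, gv q i⟫| ≤ 1 * gr q i ^ 2 := by
    intro i
    rw [one_mul]
    calc |⟪p, gv q i⟫| ≤ Metric.infDist p (Tsp q (i : ℕ) : Set (Pt d)) * gr q i := fact5 q p i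
      _ ≤ gr q i * gr q i := mul_le_mul_of_nonneg_right (hgr p hp i) (norm_nonneg _)
      _ = gr q i ^ 2 := (sq (gr q i)).symm
  have h2le3 : (2:ℝ) ^ k ≤ 3 ^ k := pow_le_pow_left₀ (by norm_num) (by norm_num) k
  have hk1 : (1:ℝ) ≤ (k:ℝ) := by exact_mod_cast hk
  have h3pos : (0:ℝ) < 3 ^ k := by positivity
  by_cases hcase : ∃ i : Fin k, gr q i = 0
  · -- some greedy residual vanishes: p lies in a small span
    have hex : ∃ n : ℕ, ∃ i : Fin k, (i : ℕ) = n ∧ gr q i = 0 := by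
      obtain ⟨i, hi⟩ := hcase; exact ⟨i, i, rfl, hi⟩
    set n₀ := Nat.find hex with hn₀
    obtain ⟨i₀, hi₀, hri₀⟩ := Nat.find_spec hex
    have hmin : ∀ j : Fin k, (j : ℕ) < n₀ → gr q j ≠ 0 := by
      intro j hj hz
      exact Nat.find_min hex hj ⟨j, rfl, hz⟩
    have hn₀i : n₀ = (i₀ : ℕ) := by rw [hn₀, ← hi₀]
    have hn₀k : n₀ < k := by rw [hn₀i]; exact i₀.isLt
    have hpmem : p ∈ Tsp q n₀ := by
      have h1 : Metric.infDist p (Tsp q (i₀ : ℕ) : Set (Pt d)) ≤ 0 := by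
        rw [← hri₀]; exact hgr p hp i₀
      have h2 : ‖p - Submodule.orthogonalProjectionOnto (Tsp q (i₀ : ℕ)) p‖ ≤ 0 := by
        rw [← infDist_sub]; exact h1
      have h3 : p = (Submodule.orthogonalProjectionOnto (Tsp q (i₀ : ℕ)) p : Pt d) := by
        have := norm_nonneg (p - Submodule.orthogonalProjectionOnto (Tsp q (i₀ : ℕ)) p)
        have : ‖p - Submodule.orthogonalProjectionOnto (Tsp q (i₀ : ℕ)) p‖ = 0 := le_antisymm h2 this
        have := norm_eq_zero.mp this
        rw [sub_eq_zero] at this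
        exact this
      rw [hn₀i, h3]
      exact SetLike.coe_mem _
    have hlem := lemA q f1 hadd1 hhom1 h hh hfq1 hb n₀ (le_of_lt hn₀k) 1 (by norm_num)
      hmin p hpmem (fun i hi => hpbd i)
    have hk3 : (3:ℝ) ^ k ≤ k * 3 ^ k := le_mul_of_one_le_left (le_of_lt h3pos) hk1
    have hco : (1:ℝ) * (2 ^ n₀ - 1) * h ≤ 2 * k * 3 ^ k * h := by
      apply mul_le_mul_of_nonneg_right _ hh
      have : (2:ℝ) ^ n₀ ≤ 2 ^ k := pow_le_pow_right₀ (by norm_num) (le_of_lt hn₀k)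
      linarith
    exact le_trans hlem hco
  · push_neg at hcase
    set last : Fin k := ⟨k - 1, by omega⟩ with hlast
    have hlastval : (last : ℕ) = k - 1 := rfl
    have hmono : ∀ i : Fin k, gr q last ≤ gr q i := by
      intro i
      have h1 : gr q last = Metric.infDist (q last) (Tsp q (k - 1) : Set (Pt d)) := by
        rw [gr_eq_infDist]
      have h2 : Metric.infDist (q last) (Tsp q (k - 1) : Set (Pt d)) ≤
          Metric.infDist (q last) (Tsp q (i : ℕ) : Set (Pt d)) := by
        apply Metric.infDist_le_infDist_of_subset
        · exact SetLike.coe_subset_coe.mpr (Tsp_mono q (by omega))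
        · exact ⟨0, Submodule.zero_mem _⟩
      rw [h1]
      exact le_trans h2 (hgr _ (hqP last) i)
    have hrlast : 0 < gr q last := lt_of_le_of_ne (norm_nonneg _) (Ne.symm (hcase last))
    -- orthonormal family
    set e : Fin k → Pt d := fun i => (gr q i)⁻¹ • gv q i with he
    have hortho : Orthonormal ℝ e := by
      rw [orthonormal_iff_ite]
      intro i j
      by_cases hij : i = j
      · subst hij
        have hgr0 : gr q i ≠ 0 := hcase i
        have hnorm : ‖e i‖ = 1 := by
          rw [he]
          simp only []
          have hge : (0:ℝ) ≤ gr q i := norm_nonneg _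
          rw [norm_smul, Real.norm_eq_abs, abs_inv, abs_of_nonneg hge]
          exact inv_mul_cancel₀ hgr0
        rw [if_pos rfl, real_inner_self_eq_norm_sq, hnorm]
        norm_num
      · rw [if_neg hij]
        have hperp : ∀ a b : Fin k, (a : ℕ) < (b : ℕ) → ⟪gv q b, gv q a⟫ = 0 := by
          intro a b hab
          exact gv_inner_Tsp q b (Tsp_mono q (by omega) (gv_mem_Tsp q a))
        have hgv : ⟪gv q i, gv q j⟫ = 0 := by
          rcases lt_or_gt_of_ne (fun hc => hij (Fin.ext hc) : (i:ℕ) ≠ (j:ℕ)) with hlt | hgt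
          · rw [real_inner_comm]; exact hperp i j hlt
          · exact hperp j i hgt
        simp only [he, real_inner_smul_left, real_inner_smul_right, hgv, mul_zero]
    have hememb : ∀ i : Fin k, e i ∈ Tsp q k := by
      intro i
      exact Submodule.smul_mem _ _ (Tsp_mono q i.isLt (gv_mem_Tsp q i))
    have hfrk : k ≤ Module.finrank ℝ (Tsp q k) := by
      have hsle : Submodule.span ℝ (Set.range e) ≤ Tsp q k := by
        rw [Submodule.span_le]
        rintro _ ⟨i, rfl⟩
        exact hememb i
      have hcard : Module.finrank ℝ (Submodule.span ℝ (Set.range e)) = k := by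
        rw [finrank_span_eq_card hortho.linearIndependent, Fintype.card_fin]
      calc k = Module.finrank ℝ (Submodule.span ℝ (Set.range e)) := hcard.symm
        _ ≤ Module.finrank ℝ (Tsp q k) := Submodule.finrank_mono hsle
    have hfinE : Module.finrank ℝ (Pt d) = d := finrank_euclideanSpace_fin
    have hHperp : Module.finrank ℝ H + Module.finrank ℝ Hᗮ = d := by
      have h0 := Submodule.finrank_add_finrank_orthogonal (K := H)
      rw [hfinE] at h0
      exact h0
    have hkd : k - 1 ≤ d := by
      have := Submodule.finrank_le H
      omega
    have hinf : 1 ≤ Module.finrank ℝ ((Tsp q k) ⊓ Hᗮ : Submodule ℝ (Pt d)) := by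
      have hs := Submodule.finrank_sup_add_finrank_inf_eq (Tsp q k) Hᗮ
      have hsup : Module.finrank ℝ ((Tsp q k) ⊔ Hᗮ : Submodule ℝ (Pt d)) ≤ d := by
        have := Submodule.finrank_le ((Tsp q k) ⊔ Hᗮ)
        omega
      omega
    have hbot : ((Tsp q k) ⊓ Hᗮ : Submodule ℝ (Pt d)) ≠ ⊥ := by
      intro hb0
      rw [hb0, finrank_bot] at hinf
      omega
    obtain ⟨u, humem, hune⟩ := Submodule.exists_mem_ne_zero_of_ne_bot hbot
    set w : Pt d := ‖u‖⁻¹ • u with hw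
    have hwn : ‖w‖ = 1 := norm_smul_inv_norm hune
    have hwTk : w ∈ Tsp q k := Submodule.smul_mem _ _ (Submodule.mem_inf.mp humem).1
    have hwperp : w ∈ Hᗮ := Submodule.smul_mem _ _ (Submodule.mem_inf.mp humem).2
    set f2 : Pt d → ℝ := fun x => |⟪x, w⟫| with hf2
    have hadd2 : ∀ x y, f2 (x + y) ≤ f2 x + f2 y := by
      intro x y
      simp only [hf2, inner_add_left]
      exact abs_add_le _ _
    have hhom2 : ∀ (a : ℝ) (x : Pt d), f2 (a • x) = |a| * f2 x := by
      intro a x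
      simp only [hf2, real_inner_smul_left, abs_mul]
    have hfq2 : ∀ i : Fin k, f2 (q i) ≤ h := by
      intro i
      have hz : ⟪(Submodule.orthogonalProjectionOnto H (q i) : Pt d), w⟫ = 0 :=
        (Submodule.mem_orthogonal H w).mp hwperp _ (SetLike.coe_mem _)
      have h1 : ⟪q i, w⟫ = ⟪q i - Submodule.orthogonalProjectionOnto H (q i), w⟫ := by
        rw [inner_sub_left, hz]; ring
      calc f2 (q i) = |⟪q i - Submodule.orthogonalProjectionOnto H (q i), w⟫| := by rw [hf2]; simp only []; rw [h1]
        _ ≤ ‖q i - Submodule.orthogonalProjectionOnto H (q i)‖ * ‖w‖ := abs_real_inner_le_norm _ _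
        _ = Metric.infDist (q i) (H : Set (Pt d)) := by rw [hwn, mul_one, infDist_sub]
        _ ≤ h := hfq1 i
    have hwbd : ∀ i : Fin k, (i : ℕ) < k → |⟪w, gv q i⟫| ≤ (gr q last)⁻¹ * gr q i ^ 2 := by
      intro i _
      have h1 : |⟪w, gv q i⟫| ≤ gr q i := by
        calc |⟪w, gv q i⟫| ≤ ‖w‖ * ‖gv q i‖ := abs_real_inner_le_norm _ _
          _ = gr q i := by rw [hwn, one_mul]; rfl
      have h2 : gr q i ≤ (gr q last)⁻¹ * gr q i ^ 2 := by
        rw [← div_eq_inv_mul, le_div_iff₀ hrlast]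
        have := hmono i
        nlinarith [norm_nonneg (gv q i)]
      linarith
    have hlem2 := lemA q f2 hadd2 hhom2 h hh hfq2 hb k le_rfl (gr q last)⁻¹
      (le_of_lt (inv_pos.mpr hrlast)) (fun i _ => hcase i) w hwTk hwbd
    have hf2w : f2 w = 1 := by
      rw [hf2]; simp only []
      rw [real_inner_self_eq_norm_sq, hwn]
      norm_num
    have hrbound : gr q last ≤ (2 ^ k - 1) * h := by
      rw [hf2w] at hlem2
      have h1 : gr q last * 1 ≤ gr q last * ((gr q last)⁻¹ * (2 ^ k - 1) * h) :=
        mul_le_mul_of_nonneg_left hlem2 (le_of_lt hrlast)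
      rw [mul_one] at h1
      calc gr q last ≤ gr q last * ((gr q last)⁻¹ * (2 ^ k - 1) * h) := h1
        _ = (gr q last * (gr q last)⁻¹) * ((2 ^ k - 1) * h) := by ring
        _ = (2 ^ k - 1) * h := by rw [mul_inv_cancel₀ (ne_of_gt hrlast), one_mul]
    -- now project p
    set x : Pt d := (Submodule.orthogonalProjectionOnto (Tsp q (k - 1)) p : Pt d) with hx
    have hxmem : x ∈ Tsp q (k - 1) := SetLike.coe_mem _
    have hxbd : ∀ i : Fin k, (i : ℕ) < k - 1 → |⟪x, gv q i⟫| ≤ 1 * gr q i ^ 2 := by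
      intro i hi
      have hgvmem : gv q i ∈ Tsp q (k - 1) := Tsp_mono q (by omega) (gv_mem_Tsp q i)
      have hz : ⟪p - x, gv q i⟫ = 0 := Submodule.starProjection_inner_eq_zero p (gv q i) hgvmem
      have h1 : ⟪x, gv q i⟫ = ⟪p, gv q i⟫ := by
        have : ⟪p - x, gv q i⟫ = ⟪p, gv q i⟫ - ⟪x, gv q i⟫ := inner_sub_left _ _ _
        rw [hz] at this
        linarith
      rw [h1]
      exact hpbd i
    have hlem1 := lemA q f1 hadd1 hhom1 h hh hfq1 hb (k - 1) (by omega) 1 (by norm_num)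
      (fun i _ => hcase i) x hxmem hxbd
    have hdist : dist p x ≤ gr q last := by
      rw [dist_eq_norm, hx, ← infDist_sub]
      exact hgr p hp last
    have htri : f1 p ≤ f1 x + dist p x := Metric.infDist_le_infDist_add_dist
    have hfinal : f1 p ≤ (2 ^ (k - 1) - 1) * h + (2 ^ k - 1) * h := by
      have := le_trans htri (add_le_add (le_trans hlem1 (by rw [one_mul]))
        (le_trans hdist hrbound))
      linarith
    have hco : ((2:ℝ) ^ (k - 1) - 1) * h + (2 ^ k - 1) * h ≤ 2 * k * 3 ^ k * h := by
      have h21 : (2:ℝ) ^ (k - 1) ≤ 2 ^ k := pow_le_pow_right₀ (by norm_num) (Nat.sub_le k 1)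
      have hk3 : (3:ℝ) ^ k ≤ k * 3 ^ k := le_mul_of_one_le_left (le_of_lt h3pos) hk1
      have hcoef : (2:ℝ) ^ (k - 1) - 1 + (2 ^ k - 1) ≤ 2 * k * 3 ^ k := by linarith
      calc ((2:ℝ) ^ (k - 1) - 1) * h + (2 ^ k - 1) * h
          = ((2 ^ (k - 1) - 1) + (2 ^ k - 1)) * h := by ring
        _ ≤ 2 * k * 3 ^ k * h := mul_le_mul_of_nonneg_right hcoef hh
    exact le_trans hfinal hco
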